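/- Let E be a module with a bilinear bracket [·,·] and let I : E → E be a linear map. Then for all X, Y in E and all n ∈ ℕ: [X,Y]_{I^{2n+1}} = ([X,Y]_{I^{2n}})_I - Σ_{i+j = 2n-1, 0 ≤ i,j} I^j ( T(I)(I^i X, Y) + T(I)(X, I^i Y) ), where ([·,·]_{I^{2n}})_I denotes the bracket first deformed by I^{2n} and then by I. -/

import Mathlib

variable {R : Type*} [CommRing R] {E : Type*} [AddCommGroup E] [Module R E]

/-- The underlying binary operation of a bilinear bracket. -/
def br2 (b : E →ₗ[R] E →ₗ[R] E) : E → E → E := fun x y => b x y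

/-- Deformation of a bracket `b` by an endomorphism `I`:
`[X,Y]_I = [IX,Y] + [X,IY] - I [X,Y]`. -/
def deform (I : Module.End R E) (b : E → E → E) : E → E → E :=
  fun X Y => b (I X) Y + b X (I Y) - I (b X Y)

/-- Nijenhuis torsion of `I` with respect to the bracket `b`. -/
def torsion (I : Module.End R E) (b : E → E → E) : E → E → E :=
  fun X Y => b (I X) (I Y) - I (deform I b X Y)

/-- Telescoping auxiliary function. -/
def gfun (b : E →ₗ[R] E →ₗ[R] E) (I : Module.End R E) (m : ℕ) (X Y : E) (i : ℕ) : E :=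
  (I ^ (m - i)) (b ((I ^ i) X) (I Y) + b (I X) ((I ^ i) Y))
    - (I ^ (m + 1 - i)) (b ((I ^ i) X) Y + b X ((I ^ i) Y))

lemma pow_comm_apply (I : Module.End R E) (i : ℕ) (x : E) :
    (I ^ i) (I x) = I ((I ^ i) x) := by
  rw [← Module.End.mul_apply, ← pow_succ, pow_succ', Module.End.mul_apply]

lemma step (b : E →ₗ[R] E →ₗ[R] E) (I : Module.End R E) (m i : ℕ) (hi : i < m) (X Y : E) :
    (I ^ (m - 1 - i)) (torsion I (br2 b) ((I ^ i) X) Y + torsion I (br2 b) X ((I ^ i) Y))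
      = gfun b I m X Y (i + 1) - gfun b I m X Y i := by
  obtain ⟨k, rfl⟩ : ∃ k, m = i + (k + 1) := ⟨m - i - 1, by omega⟩
  have h1 : i + (k + 1) - 1 - i = k := by omega
  have h2 : i + (k + 1) - (i + 1) = k := by omega
  have h3 : i + (k + 1) + 1 - (i + 1) = k + 1 := by omega
  have h4 : i + (k + 1) - i = k + 1 := by omega
  have h5 : i + (k + 1) + 1 - i = k + 2 := by omega
  rw [gfun, gfun, h1, h2, h3, h4, h5]
  simp only [torsion, deform, br2, pow_succ, Module.End.mul_apply, map_add, map_sub,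
    pow_comm_apply]
  abel

lemma key (b : E →ₗ[R] E →ₗ[R] E) (I : Module.End R E) (m : ℕ) (X Y : E) :
    deform (I ^ (m + 1)) (br2 b) X Y
      = deform I (deform (I ^ m) (br2 b)) X Y
        - ∑ i ∈ Finset.range m,
            (I ^ (m - 1 - i))
              (torsion I (br2 b) ((I ^ i) X) Y + torsion I (br2 b) X ((I ^ i) Y)) := by
  have hsum : ∑ i ∈ Finset.range m,
      (I ^ (m - 1 - i))
        (torsion I (br2 b) ((I ^ i) X) Y + torsion I (br2 b) X ((I ^ i) Y))
      = gfun b I m X Y m - gfun b I m X Y 0 := by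
    rw [← Finset.sum_range_sub (gfun b I m X Y)]
    exact Finset.sum_congr rfl fun i hi => step b I m i (Finset.mem_range.mp hi) X Y
  rw [hsum]
  simp only [gfun, Nat.sub_self, Nat.sub_zero, pow_zero, Module.End.one_apply,
    Nat.add_sub_cancel_left, Nat.add_sub_cancel, pow_one]
  simp only [deform, br2, pow_succ, Module.End.mul_apply, map_add, map_sub, pow_comm_apply]
  abel

theorem stmt8 (b : E →ₗ[R] E →ₗ[R] E) (I : Module.End R E) (n : ℕ) (X Y : E) :
    deform (I ^ (2 * n + 1)) (br2 b) X Y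
      = deform I (deform (I ^ (2 * n)) (br2 b)) X Y
        - ∑ i ∈ Finset.range (2 * n),
            (I ^ (2 * n - 1 - i))
              (torsion I (br2 b) ((I ^ i) X) Y + torsion I (br2 b) X ((I ^ i) Y)) := by
  exact key b I (2 * n) X Y
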